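/- Let f = χ_{B_R} be the indicator of a ball, an eigenfunction of the regularizer R in the sense λf ∈ ∂R(f). Then the minimizer of the variational problem min_u (λ'/2)‖u − f‖₂² + R(u) is u = c·f for a constant 0 ≤ c < 1 depending on λ' and λ, namely c = max(0, 1 − λ/λ'); i.e., eigenfunctions of one-homogeneous regularizers are reconstructed up to a loss of contrast. -/

import Mathlib

open scoped RealInnerProductSpace

/-- loss of contrast for eigenfunctions of a one-homogeneous
regularizer: if `λ f ∈ ∂J(f)` for a convex, nonnegative, positively
one-homogeneous functional `J`, then `u = max(0, 1 - λ/λ') • f` minimizes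
`(λ'/2)‖u - f‖² + J(u)`. -/
theorem eigenfunction_loss_of_contrast {H : Type*} [NormedAddCommGroup H]
    [InnerProductSpace ℝ H]
    (J : H → ℝ) (hJconv : ConvexOn ℝ Set.univ J)
    (hJhom : ∀ (c : ℝ), 0 ≤ c → ∀ u : H, J (c • u) = c * J u)
    (hJnonneg : ∀ u : H, 0 ≤ J u)
    (f : H) (lam lam' : ℝ) (hlam : 0 < lam) (hlam' : 0 < lam')
    (hEig : ∀ w : H, J f + ⟪lam • f, w - f⟫ ≤ J w) :
    ∀ u : H,
      lam' / 2 * ‖(max 0 (1 - lam / lam')) • f - f‖ ^ 2 + J ((max 0 (1 - lam / lam')) • f)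
        ≤ lam' / 2 * ‖u - f‖ ^ 2 + J u := by
  intro u
  set c : ℝ := max 0 (1 - lam / lam') with hc
  have hc0 : 0 ≤ c := le_max_left _ _
  have hc1 : c ≤ 1 := by
    apply max_le (by norm_num)
    have : 0 ≤ lam / lam' := le_of_lt (div_pos hlam hlam')
    linarith
  have hJ0 : J (0 : H) = 0 := by
    have := hJhom 0 le_rfl 0
    simpa using this
  have hff : ⟪f, f⟫ = ‖f‖ ^ 2 := real_inner_self_eq_norm_sq f
  -- J f ≤ lam * ‖f‖²
  have h1 : J f ≤ lam * ‖f‖ ^ 2 := by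
    have h := hEig 0
    rw [hJ0, zero_sub, inner_neg_right, real_inner_smul_left, hff] at h
    linarith
  -- lam * ‖f‖² ≤ J f
  have h2 : lam * ‖f‖ ^ 2 ≤ J f := by
    have h := hEig ((2 : ℝ) • f)
    have h2f : (2 : ℝ) • f - f = f := by
      rw [two_smul]; abel
    rw [h2f, real_inner_smul_left, hff, hJhom 2 (by norm_num) f] at h
    linarith
  have hJf : J f = lam * ‖f‖ ^ 2 := le_antisymm h1 h2
  -- subgradient inequality at u
  have hsub : lam * ⟪f, u⟫ ≤ J u := by
    have h := hEig u
    rw [real_inner_smul_left, inner_sub_right, hff, hJf] at h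
    linarith
  -- combined bound with min
  have hkey : min lam lam' * ⟪f, u⟫ ≤ J u := by
    rcases le_or_gt 0 (⟪f, u⟫ : ℝ) with hb | hb
    · calc min lam lam' * ⟪f, u⟫ ≤ lam * ⟪f, u⟫ :=
            mul_le_mul_of_nonneg_right (min_le_left _ _) hb
        _ ≤ J u := hsub
    · have : min lam lam' * ⟪f, u⟫ ≤ 0 :=
        mul_nonpos_of_nonneg_of_nonpos (le_min hlam.le hlam'.le) hb.le
      exact this.trans (hJnonneg u)
  have hmin : lam' * (1 - c) = min lam lam' := by
    rcases le_total lam lam' with h | h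
    · have hdiv : lam / lam' ≤ 1 := (div_le_one hlam').mpr h
      have hcv : c = 1 - lam / lam' := by
        rw [hc, max_eq_right]; linarith
      rw [hcv, min_eq_left h]
      field_simp
      ring
    · have hdiv : 1 ≤ lam / lam' := (one_le_div hlam').mpr h
      have hcv : c = 0 := by
        rw [hc, max_eq_left]; linarith
      rw [hcv, min_eq_right h]; ring
  -- c * lam = c * (lam' * (1 - c))
  have hclam : c * lam = c * (lam' * (1 - c)) := by
    rcases le_total lam lam' with h | h
    · rw [hmin, min_eq_left h]
    · have hdiv : 1 ≤ lam / lam' := (one_le_div hlam').mpr h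
      have hcv : c = 0 := by
        rw [hc, max_eq_left]; linarith
      rw [hcv]; ring
  -- expand norms
  have hcf : ‖c • f - f‖ ^ 2 = (1 - c) ^ 2 * ‖f‖ ^ 2 := by
    have : c • f - f = -((1 - c) • f) := by
      rw [sub_smul, one_smul]; abel
    rw [this, norm_neg, norm_smul, mul_pow, Real.norm_eq_abs, sq_abs]
  have huf : ‖u - f‖ ^ 2 = ‖u‖ ^ 2 - 2 * ⟪u, f⟫ + ‖f‖ ^ 2 :=
    norm_sub_sq_real u f
  have hJcf : J (c • f) = c * (lam * ‖f‖ ^ 2) := by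
    rw [hJhom c hc0 f, hJf]
  have hsq : (0 : ℝ) ≤ ‖u‖ ^ 2 - 2 * (c * ⟪u, f⟫) + c ^ 2 * ‖f‖ ^ 2 := by
    have h := sq_nonneg ‖u - c • f‖
    rw [norm_sub_sq_real, real_inner_smul_right, norm_smul, mul_pow,
      Real.norm_eq_abs, sq_abs] at h
    linarith
  have hcomm : ⟪u, f⟫ = ⟪f, u⟫ := real_inner_comm f u
  rw [hcf, huf, hJcf]
  rw [hcomm] at hsq
  nlinarith [hkey, hsq, hmin, hclam, sq_nonneg ‖f‖]
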